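/- Let d∈ℕ, let φ:ℝ^d→ℂ be continuous with ‖φ‖_{W^1}<∞ (i.e., φ∈W₀^1), and let μ be a finite complex Borel measure on ℝ^d. Then the convolution φ∗μ, defined by (φ∗μ)(x)=∫_{ℝ^d}φ(x−y)dμ(y), is continuous on ℝ^d and satisfies ‖φ∗μ‖_{W^1} ≤ 2^d ‖φ‖_{W^1} ‖μ‖. -/

import Mathlib

open MeasureTheory ENNReal

noncomputable section

abbrev Euc (d : ℕ) := EuclideanSpace ℝ (Fin d)

/-- Embedding of `ℤ^d` into `ℝ^d`. -/
def zemb {d : ℕ} (k : Fin d → ℤ) : Euc d := WithLp.toLp 2 (fun i => (k i : ℝ))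

/-- `ess sup_{x ∈ [0,1]^d} |f(x+k)|`, valued in `ℝ≥0∞`. -/
def cubeSup {d : ℕ} (f : Euc d → ℂ) (k : Fin d → ℤ) : ℝ≥0∞ :=
  essSup (fun x => (‖f (x + zemb k)‖₊ : ℝ≥0∞))
    (volume.restrict {x : Euc d | ∀ i, x i ∈ Set.Icc (0:ℝ) 1})

/-- The Wiener amalgam norm `‖f‖_{W^p}`. -/
def WNorm {d : ℕ} (p : ℝ≥0∞) (f : Euc d → ℂ) : ℝ≥0∞ :=
  if p = ∞ then ⨆ k : Fin d → ℤ, cubeSup f k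
  else (∑' k : Fin d → ℤ, cubeSup f k ^ p.toReal) ^ (1 / p.toReal)

/-- Membership in `W₀^1`: continuous with finite `W^1` norm. -/
def MemW01 {d : ℕ} (f : Euc d → ℂ) : Prop := Continuous f ∧ WNorm 1 f < ∞

/-- `(W^1)^{(r)}` norm of a vector of functions. -/
def WNormVec {d r : ℕ} (Φ : Fin r → Euc d → ℂ) : ℝ≥0∞ := ∑ i, WNorm 1 (Φ i)

/-- the `ℓ^p` norm of a family of complex numbers, valued in `ℝ≥0∞`. -/
def lpNorm {ι : Type*} (p : ℝ≥0∞) (c : ι → ℂ) : ℝ≥0∞ :=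
  if p = ∞ then ⨆ j, (‖c j‖₊ : ℝ≥0∞)
  else (∑' j, (‖c j‖₊ : ℝ≥0∞) ^ p.toReal) ^ (1 / p.toReal)

/-- The `(ℓ^p(ℤ^d))^{(r)}` norm `‖C‖ = ∑_i ‖c^i‖_{ℓ^p}`. -/
def vlpNorm {d r : ℕ} (p : ℝ≥0∞) (C : Fin r → (Fin d → ℤ) → ℂ) : ℝ≥0∞ :=
  ∑ i, lpNorm p (C i)

/-- `f_C = ∑_{k ∈ ℤ^d} ∑_i c^i(k) φ^i(· - k)`. -/
def genFun {d r : ℕ} (Φ : Fin r → Euc d → ℂ) (C : Fin r → (Fin d → ℤ) → ℂ)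
    (x : Euc d) : ℂ :=
  ∑' k : Fin d → ℤ, ∑ i, C i k * Φ i (x - zemb k)

/-- Integral of a complex-valued function against a finite complex Borel measure,
via the Jordan decompositions of the real and imaginary parts. -/
def cInt {d : ℕ} (μ : ComplexMeasure (Euc d)) (f : Euc d → ℂ) : ℂ :=
  ((∫ x, f x ∂(ComplexMeasure.re μ).toJordanDecomposition.posPart) -
    (∫ x, f x ∂(ComplexMeasure.re μ).toJordanDecomposition.negPart)) +
  Complex.I * ((∫ x, f x ∂(ComplexMeasure.im μ).toJordanDecomposition.posPart) -
    (∫ x, f x ∂(ComplexMeasure.im μ).toJordanDecomposition.negPart))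

/-- The convolution `(φ ∗ μ)(x) = ∫ φ(x - y) dμ(y)`. -/
def mconv {d : ℕ} (μ : ComplexMeasure (Euc d)) (φ : Euc d → ℂ) (x : Euc d) : ℂ :=
  cInt μ (fun y => φ (x - y))

/-- The total variation norm `|μ|(ℝ^d)` of a finite complex Borel measure, as the
supremum of `∑ ‖μ(S_i)‖` over finite disjoint families of measurable sets. -/
def cmNorm {d : ℕ} (μ : ComplexMeasure (Euc d)) : ℝ≥0∞ :=
  ⨆ (n : ℕ) (S : Fin n → Set (Euc d)) (_ : ∀ i, MeasurableSet (S i))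
    (_ : Pairwise (Function.onFun Disjoint S)), ∑ i, (‖μ (S i)‖₊ : ℝ≥0∞)

/-- norm of a vector of complex measures. -/
def cmNormVec {d t : ℕ} (μ : Fin t → ComplexMeasure (Euc d)) : ℝ≥0∞ :=
  ∑ l, cmNorm (μ l)

/-- The Riesz condition with explicit constants. -/
def RieszWith {d r : ℕ} (p : ℝ≥0∞) (Φ : Fin r → Euc d → ℂ) (m M : ℝ) : Prop :=
  0 < m ∧ m ≤ M ∧ ∀ C : Fin r → (Fin d → ℤ) → ℂ, vlpNorm p C < ∞ →
    ENNReal.ofReal m * vlpNorm p C ≤ eLpNorm (genFun Φ C) p volume ∧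
    eLpNorm (genFun Φ C) p volume ≤ ENNReal.ofReal M * vlpNorm p C

/-- The Riesz (unconditional basis) condition for `p`. -/
def RieszCond {d r : ℕ} (p : ℝ≥0∞) (Φ : Fin r → Euc d → ℂ) : Prop :=
  ∃ m M : ℝ, RieszWith p Φ m M

/-- `X` is a `μ⃗`-sampling set for `V^p(Φ)`. -/
def SamplingSet {d r t : ℕ} {J : Type*} (p : ℝ≥0∞) (Φ : Fin r → Euc d → ℂ)
    (μ : Fin t → ComplexMeasure (Euc d)) (X : J → Euc d) : Prop :=
  ∃ A B : ℝ, 0 < A ∧ A ≤ B ∧ ∀ C : Fin r → (Fin d → ℤ) → ℂ, vlpNorm p C < ∞ →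
    ENNReal.ofReal A * eLpNorm (genFun Φ C) p volume ≤
      ∑ l, lpNorm p (fun j => mconv (μ l) (genFun Φ C) (X j)) ∧
    ∑ l, lpNorm p (fun j => mconv (μ l) (genFun Φ C) (X j)) ≤
      ENNReal.ofReal B * eLpNorm (genFun Φ C) p volume

/-- `X` is separated with constant `δ`. -/
def SeparatedWith {d : ℕ} {J : Type*} (X : J → Euc d) (δ : ℝ) : Prop :=
  ∀ i j : J, i ≠ j → δ ≤ dist (X i) (X j)

def SeparatedSet {d : ℕ} {J : Type*} (X : J → Euc d) : Prop :=
  ∃ δ : ℝ, 0 < δ ∧ SeparatedWith X δ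

/-- Membership in `M_s(ℝ^d)`: `∫ (1+|x|)^s d|μ| < ∞`, expressed via the Jordan
decompositions of the real and imaginary parts. -/
def MemMs {d : ℕ} (s : ℝ) (μ : ComplexMeasure (Euc d)) : Prop :=
  (∫⁻ x, ENNReal.ofReal ((1 + ‖x‖) ^ s) ∂(ComplexMeasure.re μ).toJordanDecomposition.posPart < ∞) ∧
  (∫⁻ x, ENNReal.ofReal ((1 + ‖x‖) ^ s) ∂(ComplexMeasure.re μ).toJordanDecomposition.negPart < ∞) ∧
  (∫⁻ x, ENNReal.ofReal ((1 + ‖x‖) ^ s) ∂(ComplexMeasure.im μ).toJordanDecomposition.posPart < ∞) ∧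
  (∫⁻ x, ENNReal.ofReal ((1 + ‖x‖) ^ s) ∂(ComplexMeasure.im μ).toJordanDecomposition.negPart < ∞)

/-- `Φ ∈ W_s`: an `s`-localized Riesz generator. -/
def MemWs {d r : ℕ} (s : ℝ) (Φ : Fin r → Euc d → ℂ) : Prop :=
  (∀ i, MemW01 (Φ i)) ∧ RieszCond 2 Φ ∧
    ∀ i, ∃ C0 : ℝ, 0 < C0 ∧ ∀ x : Euc d, ‖Φ i x‖ ≤ C0 * (1 + ‖x‖) ^ (-s)

end

open MeasureTheory ENNReal

noncomputable section Aux

variable {d : ℕ}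

/-- The unit cube. -/
def Q0 (d : ℕ) : Set (Euc d) := {x : Euc d | ∀ i, x i ∈ Set.Icc (0:ℝ) 1}

lemma measurableSet_Q0 : MeasurableSet (Q0 d) := by
  have : Q0 d = ⋂ i, (fun x : Euc d => x i) ⁻¹' Set.Icc (0:ℝ) 1 := by
    ext x; simp [Q0]
  rw [this]
  exact MeasurableSet.iInter fun i =>
    (by fun_prop : Continuous fun x : Euc d => x i).measurable measurableSet_Icc

lemma signed_apply_eq (s : SignedMeasure (Euc d)) {A : Set (Euc d)} (hA : MeasurableSet A) :
    s A = (s.toJordanDecomposition.posPart A).toReal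
      - (s.toJordanDecomposition.negPart A).toReal := by
  conv_lhs => rw [← s.toSignedMeasure_toJordanDecomposition]
  rw [MeasureTheory.JordanDecomposition.toSignedMeasure]
  simp [MeasureTheory.Measure.toSignedMeasure_apply_measurable hA]
  rfl

/-- value of `cInt` on simple functions. -/
lemma cInt_simple (μ : ComplexMeasure (Euc d)) (s : SimpleFunc (Euc d) ℂ) :
    cInt μ ⇑s = ∑ c ∈ s.range, (μ (s ⁻¹' {c})) * c := by
  unfold cInt
  rw [← SimpleFunc.integral_eq_integral s (s.integrable_of_isFiniteMeasure),
      ← SimpleFunc.integral_eq_integral s (s.integrable_of_isFiniteMeasure),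
      ← SimpleFunc.integral_eq_integral s (s.integrable_of_isFiniteMeasure),
      ← SimpleFunc.integral_eq_integral s (s.integrable_of_isFiniteMeasure)]
  rw [SimpleFunc.integral_eq, SimpleFunc.integral_eq, SimpleFunc.integral_eq,
      SimpleFunc.integral_eq]
  rw [← Finset.sum_sub_distrib, ← Finset.sum_sub_distrib, Finset.mul_sum,
      ← Finset.sum_add_distrib]
  refine Finset.sum_congr rfl fun c hc => ?_
  have hms := s.measurableSet_fiber c
  have hre : (ComplexMeasure.re μ) (s ⁻¹' {c}) = (μ (s ⁻¹' {c})).re := by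
    rw [ComplexMeasure.re_apply]; rfl
  have him : (ComplexMeasure.im μ) (s ⁻¹' {c}) = (μ (s ⁻¹' {c})).im := by
    rw [ComplexMeasure.im_apply]; rfl
  rw [signed_apply_eq _ hms] at hre him
  set z := μ (s ⁻¹' {c})
  have : z = (((ComplexMeasure.re μ).toJordanDecomposition.posPart (s ⁻¹' {c})).toReal
      - ((ComplexMeasure.re μ).toJordanDecomposition.negPart (s ⁻¹' {c})).toReal : ℝ)
      + (((ComplexMeasure.im μ).toJordanDecomposition.posPart (s ⁻¹' {c})).toReal
      - ((ComplexMeasure.im μ).toJordanDecomposition.negPart (s ⁻¹' {c})).toReal : ℝ) * Complex.I := by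
    rw [hre, him]; exact (Complex.re_add_im z).symm
  rw [this]
  simp only [Complex.real_smul]
  push_cast
  simp only [Measure.real]
  ring

end Aux

noncomputable section Aux2
open Filter
open scoped NNReal
variable {d : ℕ}

lemma sum_fibers_le_cmNorm (μ : ComplexMeasure (Euc d)) (s : SimpleFunc (Euc d) ℂ) :
    ∑ c ∈ s.range, (‖μ (⇑s ⁻¹' {c})‖₊ : ℝ≥0∞) ≤ cmNorm μ := by
  classical
  set n := s.range.card
  set e := s.range.equivFin with he
  set S : Fin n → Set (Euc d) := fun i => ⇑s ⁻¹' {(e.symm i : ℂ)} with hS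
  have hmeas : ∀ i, MeasurableSet (S i) := fun i => s.measurableSet_fiber _
  have hdisj : Pairwise (Function.onFun Disjoint S) := by
    intro i j hij
    have hne : ((e.symm i : ℂ)) ≠ ((e.symm j : ℂ)) := by
      intro h
      exact hij (e.symm.injective (Subtype.ext h))
    exact Disjoint.preimage _ (Set.disjoint_singleton.2 hne)
  have hsum : ∑ c ∈ s.range, (‖μ (⇑s ⁻¹' {c})‖₊ : ℝ≥0∞) = ∑ i, (‖μ (S i)‖₊ : ℝ≥0∞) := by
    rw [← Finset.sum_coe_sort s.range fun c => (‖μ (⇑s ⁻¹' {c})‖₊ : ℝ≥0∞)]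
    exact (Equiv.sum_comp e.symm fun c => (‖μ (⇑s ⁻¹' {(c : ℂ)})‖₊ : ℝ≥0∞)).symm
  rw [hsum]
  unfold cmNorm
  exact le_iSup_of_le n <| le_iSup_of_le S <| le_iSup_of_le hmeas <| le_iSup_of_le hdisj le_rfl

lemma nnnorm_cInt_simple_le (μ : ComplexMeasure (Euc d)) (s : SimpleFunc (Euc d) ℂ)
    (M : ℝ≥0) (hM : ∀ y, ‖s y‖₊ ≤ M) :
    (‖cInt μ ⇑s‖₊ : ℝ≥0∞) ≤ (M : ℝ≥0∞) * cmNorm μ := by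
  rw [cInt_simple]
  calc (‖∑ c ∈ s.range, μ (⇑s ⁻¹' {c}) * c‖₊ : ℝ≥0∞)
      ≤ ∑ c ∈ s.range, (‖μ (⇑s ⁻¹' {c}) * c‖₊ : ℝ≥0∞) := by
        rw [← ENNReal.coe_finset_sum]; exact_mod_cast nnnorm_sum_le _ _
    _ ≤ ∑ c ∈ s.range, (M : ℝ≥0∞) * (‖μ (⇑s ⁻¹' {c})‖₊ : ℝ≥0∞) := by
        refine Finset.sum_le_sum fun c hc => ?_
        rw [nnnorm_mul, mul_comm]
        rw [ENNReal.coe_mul]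
        refine mul_le_mul_left ?_ _
        obtain ⟨y, hy⟩ := SimpleFunc.mem_range.1 hc
        exact_mod_cast hy ▸ hM y
    _ = (M : ℝ≥0∞) * ∑ c ∈ s.range, (‖μ (⇑s ⁻¹' {c})‖₊ : ℝ≥0∞) := by
        rw [Finset.mul_sum]
    _ ≤ (M : ℝ≥0∞) * cmNorm μ := mul_le_mul_right (sum_fibers_le_cmNorm μ s) _

lemma nnnorm_cInt_le_of_bound (μ : ComplexMeasure (Euc d)) {F : Euc d → ℂ}
    (hF : Measurable F) (M : ℝ≥0) (hM : ∀ y, ‖F y‖₊ ≤ M) :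
    (‖cInt μ F‖₊ : ℝ≥0∞) ≤ (M : ℝ≥0∞) * cmNorm μ := by
  have h0 : (0:ℂ) ∈ Metric.closedBall (0:ℂ) M := by simp
  set sq : ℕ → SimpleFunc (Euc d) ℂ :=
    fun n => SimpleFunc.approxOn F hF (Metric.closedBall 0 M) 0 h0 n with hsq
  have hb : ∀ n y, ‖sq n y‖₊ ≤ M := by
    intro n y
    have := SimpleFunc.approxOn_mem hF h0 n y
    simp only [Metric.mem_closedBall, dist_zero_right] at this
    exact this
  have htend : ∀ y, Tendsto (fun n => sq n y) atTop (nhds (F y)) := by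
    intro y
    refine SimpleFunc.tendsto_approxOn hF h0 ?_
    rw [IsClosed.closure_eq Metric.isClosed_closedBall]
    simp only [Metric.mem_closedBall, dist_zero_right]
    exact hM y
  have key : ∀ (ν : Measure (Euc d)), IsFiniteMeasure ν →
      Tendsto (fun n => ∫ y, sq n y ∂ν) atTop (nhds (∫ y, F y ∂ν)) := by
    intro ν hν
    refine tendsto_integral_of_dominated_convergence (fun _ => (M:ℝ))
      (fun n => (sq n).aestronglyMeasurable) (integrable_const _)
      (fun n => Filter.Eventually.of_forall fun y => ?_)
      (Filter.Eventually.of_forall htend)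
    exact hb n y
  have hcint : Tendsto (fun n => cInt μ ⇑(sq n)) atTop (nhds (cInt μ F)) := by
    unfold cInt
    refine Filter.Tendsto.add (Filter.Tendsto.sub ?_ ?_) (Filter.Tendsto.const_mul _ (Filter.Tendsto.sub ?_ ?_)) <;>
      exact key _ inferInstance
  have hnn : Tendsto (fun n => (‖cInt μ ⇑(sq n)‖₊ : ℝ≥0∞)) atTop
      (nhds (‖cInt μ F‖₊ : ℝ≥0∞)) :=
    (ENNReal.continuous_coe.comp continuous_nnnorm).continuousAt.tendsto.comp hcint
  exact le_of_tendsto hnn (Filter.Eventually.of_forall fun n =>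
    nnnorm_cInt_simple_le μ (sq n) M (hb n))

end Aux2

noncomputable section Aux3
open Filter
open scoped NNReal
variable {d : ℕ}

lemma cubeSup_eq (f : Euc d → ℂ) (k : Fin d → ℤ) :
    cubeSup f k = essSup (fun x => (‖f (x + zemb k)‖₊ : ℝ≥0∞)) (volume.restrict (Q0 d)) := rfl

lemma cubeSup_le_of_forall {g : Euc d → ℂ} {k : Fin d → ℤ} {c : ℝ≥0∞}
    (h : ∀ x ∈ Q0 d, (‖g (x + zemb k)‖₊ : ℝ≥0∞) ≤ c) : cubeSup g k ≤ c := by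
  rw [cubeSup_eq]
  exact essSup_le_of_ae_le c ((ae_restrict_mem measurableSet_Q0).mono h)

lemma le_cubeSup_of_mem {φ : Euc d → ℂ} (hφc : Continuous φ) (m : Fin d → ℤ)
    {x₀ : Euc d} (hx₀ : x₀ ∈ Q0 d) :
    (‖φ (x₀ + zemb m)‖₊ : ℝ≥0∞) ≤ cubeSup φ m := by
  by_contra hlt
  push_neg at hlt
  set f : Euc d → ℝ≥0∞ := fun x => (‖φ (x + zemb m)‖₊ : ℝ≥0∞) with hf
  have hfc : Continuous f :=
    ENNReal.continuous_coe.comp (hφc.comp (continuous_id.add continuous_const)).nnnorm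
  set U : Set (Euc d) := f ⁻¹' Set.Ioi (cubeSup φ m) with hU
  have hUopen : IsOpen U := isOpen_Ioi.preimage hfc
  have hx₀U : x₀ ∈ U := hlt
  set c : Euc d := WithLp.toLp 2 (fun _ => (1/2 : ℝ)) with hc
  have hγ : Continuous fun s : ℝ => x₀ + s • (c - x₀) := by continuity
  have h0 : x₀ + (0:ℝ) • (c - x₀) = x₀ := by simp
  have hnhds : (fun s : ℝ => x₀ + s • (c - x₀)) ⁻¹' U ∈ nhds (0:ℝ) := by
    apply hγ.continuousAt.preimage_mem_nhds
    rw [h0]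
    exact hUopen.mem_nhds hx₀U
  obtain ⟨ε, hε, hball⟩ := Metric.mem_nhds_iff.1 hnhds
  set s : ℝ := min (ε/2) 1 with hs
  have hspos : 0 < s := lt_min (by linarith) one_pos
  have hs1 : s ≤ 1 := min_le_right _ _
  set y : Euc d := x₀ + s • (c - x₀) with hy
  have hyU : y ∈ U := by
    apply hball
    rw [Metric.mem_ball, Real.dist_eq, sub_zero, abs_of_pos hspos]
    calc s ≤ ε/2 := min_le_left _ _
      _ < ε := by linarith
  set Qint : Set (Euc d) := {x | ∀ i, x i ∈ Set.Ioo (0:ℝ) 1} with hQint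
  have hQintopen : IsOpen Qint := by
    have : Qint = ⋂ i, (fun x : Euc d => x i) ⁻¹' Set.Ioo (0:ℝ) 1 := by
      ext x; simp [hQint]
    rw [this]
    exact isOpen_iInter_of_finite fun i => isOpen_Ioo.preimage (by fun_prop : Continuous fun x : Euc d => x i)
  have hyQint : y ∈ Qint := by
    intro i
    have hx0i := hx₀ i
    simp only [Set.mem_Icc] at hx0i
    have hyi : y i = x₀ i + s * (1/2 - x₀ i) := rfl
    constructor
    · rw [hyi]; nlinarith [hx0i.1, hx0i.2]
    · rw [hyi]; nlinarith [hx0i.1, hx0i.2]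
  have hsub : Qint ⊆ Q0 d := fun x hx i => ⟨le_of_lt (hx i).1, le_of_lt (hx i).2⟩
  have hVpos : 0 < volume (U ∩ Qint) :=
    (hUopen.inter hQintopen).measure_pos volume ⟨y, hyU, hyQint⟩
  have hae : ∀ᵐ x ∂(volume.restrict (Q0 d)), f x ≤ cubeSup φ m := ae_le_essSup f
  have hzero : volume.restrict (Q0 d) U = 0 := by
    rw [ae_iff] at hae
    convert hae using 2
    ext x
    simp [hU, not_le]
  rw [Measure.restrict_apply hUopen.measurableSet] at hzero
  have : volume (U ∩ Qint) = 0 :=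
    measure_mono_null (Set.inter_subset_inter_right U hsub) hzero
  exact absurd this (ne_of_gt hVpos)

end Aux3

noncomputable section Aux4
open Filter
open scoped NNReal
variable {d : ℕ}

lemma WNorm_one_eq (f : Euc d → ℂ) : WNorm 1 f = ∑' k, cubeSup f k := by
  simp [WNorm, ENNReal.one_ne_top]

/-- floor vector -/
def mfl (z : Euc d) : Fin d → ℤ := fun i => ⌊z i⌋

lemma sub_zemb_mfl_mem (z : Euc d) : z - zemb (mfl z) ∈ Q0 d := by
  intro i
  have h1 : (z - zemb (mfl z)) i = z i - (⌊z i⌋ : ℝ) := by simp [zemb, mfl]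
  rw [h1]
  constructor
  · linarith [Int.floor_le (z i)]
  · linarith [Int.lt_floor_add_one (z i)]

lemma nnnorm_le_cubeSup_mfl {φ : Euc d → ℂ} (hφc : Continuous φ) (z : Euc d) :
    (‖φ z‖₊ : ℝ≥0∞) ≤ cubeSup φ (mfl z) := by
  have h := le_cubeSup_of_mem hφc (mfl z) (sub_zemb_mfl_mem z)
  have h2 : z - zemb (mfl z) + zemb (mfl z) = z := by abel
  rwa [h2] at h

lemma nnnorm_le_WNorm {φ : Euc d → ℂ} (hφc : Continuous φ) (z : Euc d) :
    (‖φ z‖₊ : ℝ≥0∞) ≤ WNorm 1 φ := by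
  rw [WNorm_one_eq]
  exact (nnnorm_le_cubeSup_mfl hφc z).trans (ENNReal.le_tsum (mfl z))

lemma norm_le_toReal {φ : Euc d → ℂ} (hφc : Continuous φ) (hφW : WNorm 1 φ < ∞) (z : Euc d) :
    ‖φ z‖ ≤ (WNorm 1 φ).toReal := by
  have h := ENNReal.toReal_mono hφW.ne (nnnorm_le_WNorm hφc z)
  simpa using h

lemma integrable_of_cont_bdd {f : Euc d → ℂ} (hc : Continuous f) (B : ℝ)
    (hB : ∀ y, ‖f y‖ ≤ B) (ν : Measure (Euc d)) [IsFiniteMeasure ν] : Integrable f ν :=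
  Integrable.mono' (integrable_const B) hc.aestronglyMeasurable (Filter.Eventually.of_forall hB)

lemma mconv_continuous {φ : Euc d → ℂ} (hφc : Continuous φ) (hφW : WNorm 1 φ < ∞)
    (μ : ComplexMeasure (Euc d)) : Continuous (mconv μ φ) := by
  set B := (WNorm 1 φ).toReal with hB
  have key : ∀ (ν : Measure (Euc d)), IsFiniteMeasure ν →
      Continuous fun x => ∫ y, φ (x - y) ∂ν := by
    intro ν hν
    apply continuous_of_dominated (bound := fun _ => B)
    · exact fun x => (hφc.comp (continuous_const.sub continuous_id)).aestronglyMeasurable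
    · exact fun x => Filter.Eventually.of_forall fun y => norm_le_toReal hφc hφW _
    · exact integrable_const B
    · exact Filter.Eventually.of_forall fun y =>
        hφc.comp (continuous_id.sub continuous_const)
  unfold mconv cInt
  refine Continuous.add (Continuous.sub ?_ ?_) (Continuous.mul continuous_const (Continuous.sub ?_ ?_)) <;>
    exact key _ inferInstance

end Aux4

noncomputable section Aux5
open Filter
open scoped NNReal
variable {d : ℕ}

lemma cInt_finset_sum {ι : Type*} (μ : ComplexMeasure (Euc d)) (K : Finset ι)
    (h : ι → Euc d → ℂ)
    (hint : ∀ (ν : Measure (Euc d)), IsFiniteMeasure ν → ∀ k ∈ K, Integrable (h k) ν) :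
    cInt μ (fun y => ∑ k ∈ K, h k y) = ∑ k ∈ K, cInt μ (h k) := by
  unfold cInt
  rw [integral_finset_sum K (hint _ inferInstance), integral_finset_sum K (hint _ inferInstance),
      integral_finset_sum K (hint _ inferInstance), integral_finset_sum K (hint _ inferInstance)]
  rw [← Finset.sum_sub_distrib, ← Finset.sum_sub_distrib, Finset.mul_sum,
      ← Finset.sum_add_distrib]

lemma cInt_const_mul (μ : ComplexMeasure (Euc d)) (c : ℂ) (f : Euc d → ℂ) :
    cInt μ (fun y => c * f y) = c * cInt μ f := by
  unfold cInt
  rw [integral_const_mul, integral_const_mul, integral_const_mul, integral_const_mul]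
  ring

lemma isCompact_Q0 : IsCompact (Q0 d) := by
  rw [Metric.isCompact_iff_isClosed_bounded]
  constructor
  · have : Q0 d = ⋂ i, (fun x : Euc d => x i) ⁻¹' Set.Icc (0:ℝ) 1 := by
      ext x; simp [Q0]
    rw [this]
    exact isClosed_iInter fun i => isClosed_Icc.preimage (by fun_prop : Continuous fun x : Euc d => x i)
  · refine (Metric.isBounded_closedBall (x := (0 : Euc d)) (r := (d:ℝ)+1)).subset ?_
    intro x hx
    rw [Metric.mem_closedBall, dist_zero_right, EuclideanSpace.norm_eq]
    have h1 : ∑ i, ‖x i‖^2 ≤ (d:ℝ) := by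
      calc ∑ i, ‖x i‖^2 ≤ ∑ _i : Fin d, (1:ℝ) := by
            refine Finset.sum_le_sum fun i _ => ?_
            have := hx i
            rw [Real.norm_eq_abs, abs_of_nonneg this.1]
            · nlinarith [this.1, this.2]
        _ = (d:ℝ) := by simp
    calc Real.sqrt (∑ i, ‖x i‖^2) ≤ Real.sqrt (((d:ℝ)+1)^2) :=
          Real.sqrt_le_sqrt (by nlinarith [Nat.cast_nonneg (α := ℝ) d])
      _ = (d:ℝ)+1 := Real.sqrt_sq (by positivity)

lemma zero_mem_Q0 : (0 : Euc d) ∈ Q0 d := by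
  intro i
  have : (0 : Euc d) i = 0 := rfl
  rw [this]
  exact ⟨le_refl _, zero_le_one⟩

lemma counting {φ : Euc d → ℂ} (hφc : Continuous φ) (K : Finset (Fin d → ℤ))
    (x : (Fin d → ℤ) → Euc d) (hx : ∀ k, x k ∈ Q0 d) (y : Euc d) :
    ∑ k ∈ K, (‖φ (x k + zemb k - y)‖₊ : ℝ≥0∞) ≤ 2^d * WNorm 1 φ := by
  classical
  set m : (Fin d → ℤ) → (Fin d → ℤ) := fun k => mfl (x k + zemb k - y) with hm
  have step1 : ∑ k ∈ K, (‖φ (x k + zemb k - y)‖₊ : ℝ≥0∞) ≤ ∑ k ∈ K, cubeSup φ (m k) :=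
    Finset.sum_le_sum fun k _ => nnnorm_le_cubeSup_mfl hφc _
  set a : Fin d → ℤ := fun i => ⌊-(y i)⌋ with ha
  have hrange : ∀ k i, k i + a i ≤ m k i ∧ m k i ≤ k i + a i + 1 := by
    intro k i
    have hxi := hx k i
    have hcoord : (x k + zemb k - y) i = x k i + (k i : ℝ) - y i := by simp [zemb]
    have hmk : m k i = ⌊x k i + (k i : ℝ) - y i⌋ := by rw [hm]; simp only [mfl]; rw [hcoord]
    have e1 : x k i + (k i : ℝ) - y i = (x k i - y i) + (k i : ℝ) := by ring
    have hmk2 : m k i = ⌊x k i - y i⌋ + k i := by rw [hmk, e1, Int.floor_add_intCast]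
    constructor
    · rw [hmk2]
      have : a i ≤ ⌊x k i - y i⌋ := Int.floor_mono (by linarith [hxi.1])
      omega
    · rw [hmk2]
      have h2 : ⌊x k i - y i⌋ ≤ ⌊-(y i) + 1⌋ := Int.floor_mono (by linarith [hxi.2])
      have h3 : ⌊-(y i) + (1:ℤ)⌋ = a i + 1 := Int.floor_add_intCast _ _
      have h4 : (((1:ℤ):ℝ)) = (1:ℝ) := by norm_num
      rw [h4] at h3
      omega
  set εf : (Fin d → ℤ) → (Fin d → Bool) := fun k i => decide (m k i = k i + a i + 1) with hε
  set ψ : (Fin d → Bool) → (Fin d → ℤ) → (Fin d → ℤ) :=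
    fun ε k i => k i + a i + (if ε i then 1 else 0) with hψ
  have hψeq : ∀ k, m k = ψ (εf k) k := by
    intro k; funext i
    have := hrange k i
    by_cases h : m k i = k i + a i + 1 <;> simp [hψ, hε, h] <;> omega
  have hψinj : ∀ ε, Function.Injective (ψ ε) := by
    intro ε k k' h
    funext i
    have := congrFun h i
    simp only [hψ] at this
    omega
  have step2 : ∑ k ∈ K, cubeSup φ (m k) ≤ 2^d * WNorm 1 φ := by
    rw [← Finset.sum_fiberwise_of_maps_to (g := εf) (t := Finset.univ)
        (fun k _ => Finset.mem_univ _) (fun k => cubeSup φ (m k))]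
    calc ∑ ε : Fin d → Bool, ∑ k ∈ K.filter (fun k => εf k = ε), cubeSup φ (m k)
        ≤ ∑ _ε : Fin d → Bool, WNorm 1 φ := by
          refine Finset.sum_le_sum fun ε _ => ?_
          have heq : ∑ k ∈ K.filter (fun k => εf k = ε), cubeSup φ (m k)
              = ∑ k ∈ K.filter (fun k => εf k = ε), cubeSup φ (ψ ε k) := by
            refine Finset.sum_congr rfl fun k hk => ?_
            have hkε : εf k = ε := (Finset.mem_filter.1 hk).2
            rw [hψeq k, hkε]
          rw [heq]
          have himg : ∑ m' ∈ (K.filter (fun k => εf k = ε)).image (ψ ε), cubeSup φ m'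
              = ∑ k ∈ K.filter (fun k => εf k = ε), cubeSup φ (ψ ε k) :=
            Finset.sum_image fun k _ k' _ h => hψinj ε h
          rw [← himg, WNorm_one_eq]
          exact ENNReal.sum_le_tsum _
      _ = 2^d * WNorm 1 φ := by
          rw [Finset.sum_const, Finset.card_univ, Fintype.card_fun]
          simp [nsmul_eq_mul]
  exact step1.trans step2

end Aux5

noncomputable section Aux6
open Filter
open scoped NNReal
variable {d : ℕ}

lemma main_bound {φ : Euc d → ℂ} (hφc : Continuous φ) (hφW : WNorm 1 φ < ∞)
    (μ : ComplexMeasure (Euc d)) :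
    WNorm 1 (mconv μ φ) ≤ (2 : ℝ≥0∞) ^ d * WNorm 1 φ * cmNorm μ := by
  classical
  set W := WNorm 1 φ with hW
  set g := mconv μ φ with hg
  have hgc : Continuous g := mconv_continuous hφc hφW μ
  have hB := norm_le_toReal hφc hφW
  -- maximizers
  have hmax : ∀ k : Fin d → ℤ, ∃ x ∈ Q0 d,
      IsMaxOn (fun x => ‖g (x + zemb k)‖) (Q0 d) x :=
    fun k => isCompact_Q0.exists_isMaxOn ⟨0, zero_mem_Q0⟩
      ((hgc.comp (continuous_id.add continuous_const)).norm.continuousOn)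
  choose xc hxc hmaxon using hmax
  set v : (Fin d → ℤ) → ℂ := fun k => g (xc k + zemb k) with hv
  have h1 : ∀ k, cubeSup g k ≤ (‖v k‖₊ : ℝ≥0∞) := by
    intro k
    refine cubeSup_le_of_forall fun x hxm => ?_
    have := hmaxon k hxm
    simp only [Set.mem_setOf_eq] at this
    exact_mod_cast this
  set c : (Fin d → ℤ) → ℂ := fun k => if v k = 0 then 1 else (‖v k‖ : ℂ) / v k with hc
  have hc1 : ∀ k, ‖c k‖ = 1 := by
    intro k
    by_cases h : v k = 0
    · simp [hc, h]
    · simp only [hc, if_neg h, norm_div, Complex.norm_real, norm_norm]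
      exact div_self (norm_ne_zero_iff.2 h)
  have hcv : ∀ k, c k * v k = (‖v k‖ : ℂ) := by
    intro k
    by_cases h : v k = 0
    · simp [hc, h]
    · simp only [hc, if_neg h]
      field_simp
  rw [WNorm_one_eq, ENNReal.tsum_eq_iSup_sum]
  refine iSup_le fun K => ?_
  -- per-finset bound
  set F : Euc d → ℂ := fun y => ∑ k ∈ K, c k * φ (xc k + zemb k - y) with hF
  have hFc : Continuous F := by
    apply continuous_finset_sum
    exact fun k _ => continuous_const.mul (hφc.comp (continuous_const.sub continuous_id))
  have hvk : ∀ k, v k = cInt μ (fun y => φ (xc k + zemb k - y)) := fun k => rfl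
  have hFint : cInt μ F = ∑ k ∈ K, c k * v k := by
    rw [hF, cInt_finset_sum μ K (fun k y => c k * φ (xc k + zemb k - y))
      (fun ν hν k _ => by
        refine integrable_of_cont_bdd
          (continuous_const.mul (hφc.comp (continuous_const.sub continuous_id)))
          ((WNorm 1 φ).toReal) (fun y => ?_) ν
        show ‖c k * φ (xc k + zemb k - y)‖ ≤ _
        rw [norm_mul, hc1 k, one_mul]
        exact hB _)]
    refine Finset.sum_congr rfl fun k _ => ?_
    rw [cInt_const_mul, ← hvk]
  have hFval : cInt μ F = ((∑ k ∈ K, ‖v k‖ : ℝ) : ℂ) := by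
    rw [hFint]
    push_cast
    exact Finset.sum_congr rfl fun k _ => hcv k
  have hsum_eq : ∑ k ∈ K, (‖v k‖₊ : ℝ≥0∞) = (‖cInt μ F‖₊ : ℝ≥0∞) := by
    rw [hFval]
    have : ‖((∑ k ∈ K, ‖v k‖ : ℝ) : ℂ)‖ = ∑ k ∈ K, ‖v k‖ := by
      rw [Complex.norm_real, Real.norm_eq_abs,
        abs_of_nonneg (Finset.sum_nonneg fun k _ => norm_nonneg _)]
    rw [← enorm_eq_nnnorm, ← ofReal_norm, this,
      ENNReal.ofReal_sum_of_nonneg (fun k _ => norm_nonneg _)]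
    exact Finset.sum_congr rfl fun k _ => (ofReal_norm _).symm
  -- bound on F
  set M0 : ℝ≥0∞ := 2^d * W with hM0
  have hM0fin : M0 ≠ ∞ := by
    refine ENNReal.mul_ne_top ?_ hφW.ne
    exact ENNReal.pow_ne_top (by norm_num)
  have hFb : ∀ y, (‖F y‖₊ : ℝ≥0∞) ≤ M0 := by
    intro y
    calc (‖F y‖₊ : ℝ≥0∞) ≤ ∑ k ∈ K, (‖c k * φ (xc k + zemb k - y)‖₊ : ℝ≥0∞) := by
          rw [← ENNReal.coe_finset_sum]
          exact_mod_cast nnnorm_sum_le _ _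
      _ = ∑ k ∈ K, (‖φ (xc k + zemb k - y)‖₊ : ℝ≥0∞) := by
          refine Finset.sum_congr rfl fun k _ => ?_
          congr 1
          rw [nnnorm_mul]
          have h1 : ‖c k‖₊ = 1 := NNReal.coe_injective (by rw [coe_nnnorm, hc1 k, NNReal.coe_one])
          rw [h1, one_mul]
      _ ≤ M0 := counting hφc K xc hxc y
  have hMb : ∀ y, ‖F y‖₊ ≤ M0.toNNReal := by
    intro y
    have h := hFb y
    rw [← ENNReal.coe_toNNReal hM0fin] at h
    exact_mod_cast h
  have hA := nnnorm_cInt_le_of_bound μ hFc.measurable M0.toNNReal hMb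
  rw [ENNReal.coe_toNNReal hM0fin] at hA
  calc ∑ k ∈ K, cubeSup g k ≤ ∑ k ∈ K, (‖v k‖₊ : ℝ≥0∞) :=
        Finset.sum_le_sum fun k _ => h1 k
    _ = (‖cInt μ F‖₊ : ℝ≥0∞) := hsum_eq
    _ ≤ M0 * cmNorm μ := hA
    _ = 2^d * W * cmNorm μ := by rw [hM0]

end Aux6

open MeasureTheory ENNReal in
/-- Lemma 4.1: for `φ ∈ W₀¹` and a finite complex Borel measure `μ`,
the convolution `φ ∗ μ` is continuous and `‖φ∗μ‖_{W¹} ≤ 2^d ‖φ‖_{W¹} ‖μ‖`. -/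
theorem conv_continuous_and_W1_bound
    (d : ℕ) (φ : Euc d → ℂ) (hφc : Continuous φ) (hφW : WNorm 1 φ < ∞)
    (μ : ComplexMeasure (Euc d)) :
    Continuous (mconv μ φ) ∧
      WNorm 1 (mconv μ φ) ≤ (2 : ℝ≥0∞) ^ d * WNorm 1 φ * cmNorm μ :=
  ⟨mconv_continuous hφc hφW μ, main_bound hφc hφW μ⟩
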